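/- If U is a family of infinite subsets of ℕ that is meager in the Ellentuck topology, then for every infinite M ⊆ ℕ and finite α ⊆ ℕ there exists an infinite L ⊆ M with [α, L] ⊆ [ℕ] \ U. -/
import Mathlib


/-- The space `[ℕ]` of infinite subsets of `ℕ`. -/
abbrev InfNat := {A : Set ℕ // A.Infinite}

/-- The Ellentuck basic set `[α, M] = {α ∪ N : N ∈ [M], max α < min N}`. -/
def EllSet (α : Finset ℕ) (M : Set ℕ) : Set InfNat :=
  {X | ↑α ⊆ X.1 ∧ X.1 \ ↑α ⊆ M ∧ ∀ a ∈ α, ∀ b ∈ X.1, b ∉ α → a < b}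

/-- The Ellentuck topology on `[ℕ]`, generated by the sets `[α, M]`. -/
def EllentuckTop : TopologicalSpace InfNat :=
  TopologicalSpace.generateFrom
    {S | ∃ (α : Finset ℕ) (M : Set ℕ), M.Infinite ∧ S = EllSet α M}

namespace EllAux

open Set

attribute [local instance 2000] EllentuckTop

/-- The elements of `M` lying above every element of `β`. -/
def restr (M : Set ℕ) (β : Finset ℕ) : Set ℕ := {n | n ∈ M ∧ ∀ a ∈ β, a < n}

lemma restr_subset (M : Set ℕ) (β : Finset ℕ) : restr M β ⊆ M := fun _ hn => hn.1

lemma restr_mono {L M : Set ℕ} (h : L ⊆ M) (β : Finset ℕ) : restr L β ⊆ restr M β :=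
  fun n hn => ⟨h hn.1, hn.2⟩

lemma restr_anti {β γ : Finset ℕ} (h : β ⊆ γ) (M : Set ℕ) : restr M γ ⊆ restr M β :=
  fun n hn => ⟨hn.1, fun a ha => hn.2 a (h ha)⟩

lemma restr_infinite {M : Set ℕ} (hM : M.Infinite) (β : Finset ℕ) : (restr M β).Infinite := by
  refine Set.Infinite.mono ?_ (hM.diff (Set.finite_Iic (β.sup id)))
  intro n hn
  refine ⟨hn.1, fun a ha => lt_of_le_of_lt (Finset.le_sup (f := id) ha) ?_⟩
  simpa [Set.mem_Iic] using hn.2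

lemma EllSet_mono {M N : Set ℕ} (h : M ⊆ N) (β : Finset ℕ) : EllSet β M ⊆ EllSet β N :=
  fun _ hX => ⟨hX.1, hX.2.1.trans h, hX.2.2⟩

lemma mem_EllSet_restr {β : Finset ℕ} {M : Set ℕ} {X : InfNat} (hX : X ∈ EllSet β M) :
    X ∈ EllSet β (restr M β) := by
  refine ⟨hX.1, ?_, hX.2.2⟩
  intro b hb
  exact ⟨hX.2.1 hb, fun a ha => hX.2.2 a ha b hb.1 (by simpa using hb.2)⟩

lemma point_mem {γ : Finset ℕ} {P : Set ℕ} (hP : P.Infinite)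
    (hab : ∀ p ∈ P, ∀ a ∈ γ, a < p) :
    (⟨↑γ ∪ P, hP.mono subset_union_right⟩ : InfNat) ∈ EllSet γ P := by
  refine ⟨subset_union_left, ?_, ?_⟩
  · intro b hb
    rcases hb.1 with h | h
    · exact absurd h hb.2
    · exact h
  · intro a ha b hb hbγ
    rcases hb with h | h
    · exact absurd h (by simpa using hbγ)
    · exact hab b h a ha

/-- `M` accepts `β` (into `D`). -/
def Accepts (D : Set InfNat) (β : Finset ℕ) (M : Set ℕ) : Prop := EllSet β M ⊆ D

/-- `M` rejects `β`: no infinite subset of `M` accepts `β`. -/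
def Rejects (D : Set InfNat) (β : Finset ℕ) (M : Set ℕ) : Prop :=
  ∀ L, L ⊆ M → L.Infinite → ¬ Accepts D β L

lemma accepts_mono {D : Set InfNat} {β : Finset ℕ} {L M : Set ℕ} (h : L ⊆ M)
    (ha : Accepts D β M) : Accepts D β L := fun X hX => ha (EllSet_mono h β hX)

lemma rejects_mono {D : Set InfNat} {β : Finset ℕ} {L M : Set ℕ} (h : L ⊆ M)
    (hr : Rejects D β M) : Rejects D β L := fun L' hL' => hr L' (hL'.trans h)

lemma decideAR (D : Set InfNat) (β : Finset ℕ) (M : Set ℕ) (hM : M.Infinite) :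
    ∃ L, L ⊆ M ∧ L.Infinite ∧ (Accepts D β L ∨ Rejects D β L) := by
  by_cases h : Rejects D β M
  · exact ⟨M, subset_rfl, hM, Or.inr h⟩
  · simp only [Rejects, not_forall] at h
    obtain ⟨L, hsub, hinf, hacc⟩ := h
    exact ⟨L, hsub, hinf, Or.inl (not_not.mp hacc)⟩

/-- Recursive construction of a chain of states. -/
lemma exists_chain {σ : Type} (P : ℕ → σ → Prop) (Q : σ → σ → Prop) (s0 : σ) (h0 : P 0 s0)
    (step : ∀ i s, P i s → ∃ t, P (i + 1) t ∧ Q s t) :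
    ∃ f : ℕ → σ, f 0 = s0 ∧ (∀ i, P i (f i)) ∧ ∀ i, Q (f i) (f (i + 1)) := by
  choose g hg1 hg2 using step
  let F : ∀ i : ℕ, {s // P i s} := fun i =>
    Nat.rec ⟨s0, h0⟩ (fun i p => ⟨g i p.1 p.2, hg1 i p.1 p.2⟩) i
  exact ⟨fun i => (F i).1, rfl, fun i => (F i).2, fun i => hg2 i (F i).1 (F i).2⟩

/-- Galvin's lemma, step 1: if `M` rejects `β`, there is `L ⊆ M` all of whose
one-point extensions inside `L` are rejected by `L`. -/
lemma step1 (D : Set InfNat) (β : Finset ℕ) (M : Set ℕ) (hM : M.Infinite)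
    (hrej : Rejects D β M) :
    ∃ L, L ⊆ restr M β ∧ L.Infinite ∧ ∀ n ∈ L, Rejects D (β ∪ {n}) L := by
  classical
  let Inv : ℕ → ℕ × Set ℕ → Prop := fun _ p =>
    p.2.Infinite ∧ p.2 ⊆ restr M β ∧ (∀ m ∈ p.2, p.1 < m) ∧ p.1 ∈ restr M β ∧
      (Accepts D (β ∪ {p.1}) p.2 ∨ Rejects D (β ∪ {p.1}) p.2)
  let Qr : ℕ × Set ℕ → ℕ × Set ℕ → Prop := fun p q => q.2 ⊆ p.2 ∧ q.1 ∈ p.2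
  obtain ⟨n0, hn0⟩ := (restr_infinite hM β).nonempty
  obtain ⟨Q0, hQ0sub, hQ0inf, hQ0dec⟩ :=
    decideAR D (β ∪ {n0}) (restr (restr M β) {n0}) (restr_infinite (restr_infinite hM β) _)
  have h0 : Inv 0 (n0, Q0) := by
    refine ⟨hQ0inf, hQ0sub.trans (restr_subset _ _), ?_, hn0, hQ0dec⟩
    intro m hm
    exact (hQ0sub hm).2 n0 (Finset.mem_singleton_self n0)
  have hstep : ∀ i p, Inv i p → ∃ q, Inv (i + 1) q ∧ Qr p q := by
    rintro i ⟨n, Q⟩ hInv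
    obtain ⟨n', hn'⟩ := hInv.1.nonempty
    obtain ⟨Q', hQ'sub, hQ'inf, hQ'dec⟩ :=
      decideAR D (β ∪ {n'}) (restr Q {n'}) (restr_infinite hInv.1 _)
    refine ⟨(n', Q'), ⟨hQ'inf, (hQ'sub.trans (restr_subset _ _)).trans hInv.2.1, ?_,
      hInv.2.1 hn', hQ'dec⟩, hQ'sub.trans (restr_subset _ _), hn'⟩
    intro m hm
    exact (hQ'sub hm).2 n' (Finset.mem_singleton_self n')
  obtain ⟨f, hf0, hInv, hQr⟩ := exists_chain Inv Qr _ h0 hstep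
  set n : ℕ → ℕ := fun i => (f i).1 with hn
  set Q : ℕ → Set ℕ := fun i => (f i).2 with hQ
  have hmono : StrictMono n := strictMono_nat_of_lt_succ fun i => (hInv i).2.2.1 _ (hQr i).2
  have hchain : ∀ i j, i ≤ j → Q j ⊆ Q i := by
    intro i j hij
    induction j, hij using Nat.le_induction with
    | base => exact subset_rfl
    | succ j hij ih => exact (hQr j).1.trans ih
  have hkey : ∀ i k, i < k → n k ∈ Q i := by
    intro i k hik
    obtain ⟨j, rfl⟩ : ∃ j, k = j + 1 := ⟨k - 1, (Nat.succ_pred_eq_of_pos (Nat.pos_of_ne_zero (by omega))).symm⟩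
    exact hchain i j (Nat.lt_succ_iff.mp hik) (hQr j).2
  set A : Set ℕ := {i | Accepts D (β ∪ {n i}) (Q i)} with hA
  by_cases hAinf : A.Infinite
  · exfalso
    refine hrej (n '' A) ?_ (hAinf.image hmono.injective.injOn) ?_
    · rintro _ ⟨i, _, rfl⟩
      exact restr_subset _ _ (hInv i).2.2.2.1
    · intro X hX
      have hYinf : (X.1 \ ↑β).Infinite := X.2.diff β.finite_toSet
      have hmmem : sInf (X.1 \ ↑β) ∈ X.1 \ ↑β := Nat.sInf_mem hYinf.nonempty
      obtain ⟨j, hjA, hj⟩ := hX.2.1 hmmem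
      have hlt : ∀ b ∈ X.1 \ ↑β, b ≠ n j → n j < b := by
        intro b hb hbne
        rw [hj]
        exact lt_of_le_of_ne (Nat.sInf_le hb) (fun h => hbne (h ▸ hj.symm ▸ rfl))
      have hmem : X ∈ EllSet (β ∪ {n j}) (Q j) := by
        refine ⟨?_, ?_, ?_⟩
        · rw [Finset.coe_union, Finset.coe_singleton]
          exact Set.union_subset hX.1 (by simpa using hj ▸ hmmem.1)
        · intro b hb
          simp only [Finset.coe_union, Finset.coe_singleton, Set.mem_diff, Set.mem_union,
            Set.mem_singleton_iff, not_or] at hb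
          have hbX := hb.1
          have hbβ := hb.2.1
          have hbnj := hb.2.2
          obtain ⟨k, hkA, hkb⟩ := hX.2.1 ⟨hbX, hbβ⟩
          have : n j < n k := hkb ▸ hlt b ⟨hbX, hbβ⟩ (hkb ▸ hbnj)
          exact hkb ▸ hkey j k (hmono.lt_iff_lt.mp this)
        · intro a ha b hb hbmem
          simp only [Finset.mem_union, Finset.mem_singleton, not_or] at ha hbmem
          rcases ha with ha | ha
          · exact hX.2.2 a ha b hb (by simpa using hbmem.1)
          · exact ha ▸ hlt b ⟨hb, by simpa using hbmem.1⟩ hbmem.2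
      exact hjA hmem
  · have hR : Aᶜ.Infinite := (Set.not_infinite.mp hAinf).infinite_compl
    refine ⟨n '' Aᶜ, ?_, hR.image hmono.injective.injOn, ?_⟩
    · rintro _ ⟨i, _, rfl⟩
      exact (hInv i).2.2.2.1
    · rintro _ ⟨i, hiR, rfl⟩
      have hreji : Rejects D (β ∪ {n i}) (Q i) := ((hInv i).2.2.2.2).resolve_left hiR
      intro L' hL'sub hL'inf hL'acc
      refine hreji (restr L' (β ∪ {n i})) ?_ (restr_infinite hL'inf _)
        (accepts_mono (restr_subset _ _) hL'acc)
      intro b hb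
      obtain ⟨k, _, hkb⟩ := hL'sub hb.1
      have : n i < n k := hkb ▸ hb.2 (n i) (by simp)
      exact hkb ▸ hkey i k (hmono.lt_iff_lt.mp this)
lemma step1_iter (D : Set InfNat) (Γ : List (Finset ℕ)) (M : Set ℕ) (hM : M.Infinite)
    (h : ∀ γ ∈ Γ, Rejects D γ M) :
    ∃ L, L ⊆ M ∧ L.Infinite ∧ ∀ γ ∈ Γ, ∀ n ∈ restr L γ, Rejects D (γ ∪ {n}) L := by
  induction Γ generalizing M with
  | nil => exact ⟨M, subset_rfl, hM, by simp⟩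
  | cons γ Γ ih =>
    obtain ⟨L1, hL1sub, hL1inf, hL1⟩ := step1 D γ M hM (h γ (by simp))
    have hL1M : L1 ⊆ M := hL1sub.trans (restr_subset _ _)
    obtain ⟨L, hLsub, hLinf, hL⟩ :=
      ih L1 hL1inf (fun γ' hγ' => rejects_mono hL1M (h γ' (by simp [hγ'])))
    refine ⟨L, hLsub.trans hL1M, hLinf, ?_⟩
    intro γ' hγ' nn hn
    rcases List.mem_cons.mp hγ' with rfl | hmem
    · exact rejects_mono hLsub (hL1 nn (hLsub hn.1))
    · exact hL γ' hmem nn hn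

/-- Structural facts about fusion chains of pairs `(Sᵢ, Mᵢ)`. -/
lemma chain_facts (f : ℕ → Finset ℕ × Set ℕ) (h0 : (f 0).1 = ∅)
    (hQ : ∀ i, (f (i + 1)).2 ⊆ (f i).2 ∧
      ∃ nn, (f (i + 1)).1 = (f i).1 ∪ {nn} ∧ nn ∈ (f i).2 ∧ ∀ a ∈ (f i).1, a < nn) :
    (∀ i j, i ≤ j → (f j).2 ⊆ (f i).2) ∧ (∀ i j, i ≤ j → (f i).1 ⊆ (f j).1) ∧
    (∀ i b, b ∈ (⋃ j, ((f j).1 : Set ℕ)) → b ∉ (f i).1 → b ∈ (f i).2) ∧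
    (⋃ j, ((f j).1 : Set ℕ)).Infinite := by
  classical
  have hMchain : ∀ i j, i ≤ j → (f j).2 ⊆ (f i).2 := by
    intro i j hij
    induction j, hij using Nat.le_induction with
    | base => exact subset_rfl
    | succ j hij ih => exact (hQ j).1.trans ih
  have hSmono : ∀ i j, i ≤ j → (f i).1 ⊆ (f j).1 := by
    intro i j hij
    induction j, hij using Nat.le_induction with
    | base => exact subset_rfl
    | succ j hij ih =>
      obtain ⟨nn, hnn, _, _⟩ := (hQ j).2
      exact ih.trans (hnn ▸ Finset.subset_union_left)
  have hmem : ∀ i b, b ∈ (⋃ j, ((f j).1 : Set ℕ)) → b ∉ (f i).1 → b ∈ (f i).2 := by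
    intro i b hb hbi
    rw [Set.mem_iUnion] at hb
    have hbex : ∃ j, b ∈ (f j).1 := by
      obtain ⟨j, hj⟩ := hb
      exact ⟨j, by simpa using hj⟩
    have hkspec : b ∈ (f (Nat.find hbex)).1 := Nat.find_spec hbex
    have hkne : Nat.find hbex ≠ 0 := fun h => by simp [h, h0] at hkspec
    obtain ⟨k', hkeq⟩ : ∃ k', Nat.find hbex = k' + 1 := ⟨Nat.find hbex - 1, by omega⟩
    rw [hkeq] at hkspec
    have hk' : b ∉ (f k').1 := Nat.find_min hbex (by omega)
    obtain ⟨nn, hnn, hnnmem, _⟩ := (hQ k').2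
    have hbnn : b = nn := by
      rw [hnn] at hkspec
      rcases Finset.mem_union.mp hkspec with h | h
      · exact absurd h hk'
      · exact Finset.mem_singleton.mp h
    have hik' : i ≤ k' := by
      by_contra hcon
      exact hbi (hSmono _ i (by omega) hkspec)
    exact hMchain i k' hik' (hbnn ▸ hnnmem)
  refine ⟨hMchain, hSmono, hmem, ?_⟩
  have hcard : ∀ i, i ≤ (f i).1.card := by
    intro i
    induction i with
    | zero => omega
    | succ i ih =>
      obtain ⟨nn, hnn, _, hlt⟩ := (hQ i).2
      have hnotmem : nn ∉ (f i).1 := fun h => lt_irrefl nn (hlt nn h)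
      have : (f (i + 1)).1.card = (f i).1.card + 1 := by
        rw [hnn, Finset.union_comm, ← Finset.insert_eq,
          Finset.card_insert_of_notMem hnotmem]
      omega
  intro hfin
  set T := hfin.toFinset with hT
  have hsub : ∀ i, (f i).1 ⊆ T := by
    intro i x hx
    rw [hT, Set.Finite.mem_toFinset]
    exact Set.mem_iUnion.mpr ⟨i, by simpa using hx⟩
  have := hcard (T.card + 1)
  have := Finset.card_le_card (hsub (T.card + 1))
  omega
lemma EllSet_sub_aux {γ δ : Finset ℕ} {P N : Set ℕ} {X : InfNat}
    (hδγ : δ ⊆ γ) (hγX : ↑γ ⊆ X.1) (hXδ : X.1 \ ↑δ ⊆ N)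
    (hXord : ∀ c ∈ δ, ∀ b ∈ X.1, b ∉ δ → c < b)
    (hPN : P ⊆ N) (hPord : ∀ b ∈ P, ∀ c ∈ γ, c < b) :
    EllSet γ P ⊆ EllSet δ N := by
  intro Y hY
  refine ⟨(Finset.coe_subset.mpr hδγ).trans hY.1, ?_, ?_⟩
  · intro b hb
    by_cases hbγ : b ∈ γ
    · exact hXδ ⟨hγX hbγ, hb.2⟩
    · exact hPN (hY.2.1 ⟨hb.1, by simpa using hbγ⟩)
  · intro c hc b hb hbδ
    by_cases hbγ : b ∈ γ
    · exact hXord c hc b (hγX (by simpa using hbγ)) hbδ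
    · exact hPord b (hY.2.1 ⟨hb, by simpa using hbγ⟩) c (hδγ hc)

lemma sInter_basic (l : List (Set InfNat))
    (hl : ∀ S ∈ l, ∃ (a : Finset ℕ) (Ma : Set ℕ), S = EllSet a Ma) (X : InfNat)
    (hX : ∀ S ∈ l, X ∈ S) :
    ∃ (γ : Finset ℕ) (P : Set ℕ), ↑γ ⊆ X.1 ∧ X.1 \ ↑γ ⊆ P ∧ X ∈ EllSet γ P ∧
      ∀ S ∈ l, EllSet γ P ⊆ S := by
  induction l with
  | nil =>
    refine ⟨∅, X.1, by simp, by simp, ⟨by simp, by simp, by simp⟩, by simp⟩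
  | cons S l ih =>
    obtain ⟨γ', P', hγ'X, hXP', hXmem', hsub'⟩ :=
      ih (fun S' hS' => hl S' (by simp [hS'])) (fun S' hS' => hX S' (by simp [hS']))
    obtain ⟨a, Ma, rfl⟩ := hl S (by simp)
    have hXS : X ∈ EllSet a Ma := hX _ (by simp)
    refine ⟨γ' ∪ a, restr (P' ∩ Ma) (γ' ∪ a), ?_, ?_, ?_, ?_⟩
    · rw [Finset.coe_union]
      exact Set.union_subset hγ'X hXS.1
    · intro b hb
      have hbγ' : b ∉ (γ' : Set ℕ) := fun h => hb.2 (by simp at h ⊢; exact Or.inl h)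
      have hba : b ∉ (a : Set ℕ) := fun h => hb.2 (by simp at h ⊢; exact Or.inr h)
      refine ⟨⟨hXP' ⟨hb.1, hbγ'⟩, hXS.2.1 ⟨hb.1, hba⟩⟩, ?_⟩
      intro c hc
      rcases Finset.mem_union.mp hc with h | h
      · exact hXmem'.2.2 c h b hb.1 (by simpa using hbγ')
      · exact hXS.2.2 c h b hb.1 (by simpa using hba)
    · refine ⟨?_, ?_, ?_⟩
      · rw [Finset.coe_union]
        exact Set.union_subset hγ'X hXS.1
      · intro b hb
        have hbγ' : b ∉ (γ' : Set ℕ) := fun h => hb.2 (by simp at h ⊢; exact Or.inl h)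
        have hba : b ∉ (a : Set ℕ) := fun h => hb.2 (by simp at h ⊢; exact Or.inr h)
        refine ⟨⟨hXP' ⟨hb.1, hbγ'⟩, hXS.2.1 ⟨hb.1, hba⟩⟩, ?_⟩
        intro c hc
        rcases Finset.mem_union.mp hc with h | h
        · exact hXmem'.2.2 c h b hb.1 (by simpa using hbγ')
        · exact hXS.2.2 c h b hb.1 (by simpa using hba)
      · intro c hc b hb hbmem
        have hbγ' : b ∉ γ' := fun h => hbmem (Finset.mem_union_left _ h)
        have hba : b ∉ a := fun h => hbmem (Finset.mem_union_right _ h)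
        rcases Finset.mem_union.mp hc with h | h
        · exact hXmem'.2.2 c h b hb hbγ'
        · exact hXS.2.2 c h b hb hba
    · intro S' hS'
      rcases List.mem_cons.mp hS' with rfl | hmem
      · refine EllSet_sub_aux Finset.subset_union_right
          (by rw [Finset.coe_union]; exact Set.union_subset hγ'X hXS.1)
          hXS.2.1 hXS.2.2 (fun b hb => hb.1.2) (fun b hb c hc => hb.2 c hc)
      · refine (EllSet_sub_aux Finset.subset_union_left
          (by rw [Finset.coe_union]; exact Set.union_subset hγ'X hXS.1)
          hXP' hXmem'.2.2 (fun b hb => hb.1.1) (fun b hb c hc => hb.2 c hc)).trans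
          (hsub' S' hmem)

lemma exists_basic {O : Set InfNat} (hO : IsOpen O) {X : InfNat} (hX : X ∈ O) :
    ∃ (γ : Finset ℕ) (P : Set ℕ), ↑γ ⊆ X.1 ∧ P.Infinite ∧ X ∈ EllSet γ P ∧ EllSet γ P ⊆ O := by
  classical
  have hb := TopologicalSpace.isTopologicalBasis_of_subbasis
    (t := EllentuckTop)
    (s := {S | ∃ (a : Finset ℕ) (Ma : Set ℕ), Ma.Infinite ∧ S = EllSet a Ma}) rfl
  obtain ⟨B, hBmem, hXB, hBO⟩ := hb.exists_subset_of_mem_open hX hO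
  obtain ⟨fS, ⟨hfin, hsubg⟩, rfl⟩ := hBmem
  set l := hfin.toFinset.toList with hl
  have hmeml : ∀ S, S ∈ l ↔ S ∈ fS := by
    intro S
    rw [hl, Finset.mem_toList, Set.Finite.mem_toFinset]
  obtain ⟨γ, P, hγX, hXP, hXmem, hsub⟩ := sInter_basic l
    (fun S hS => by
      obtain ⟨a, Ma, _, hEq⟩ := hsubg ((hmeml S).mp hS)
      exact ⟨a, Ma, hEq⟩)
    X (fun S hS => hXB S ((hmeml S).mp hS))
  refine ⟨γ, P, hγX, (X.2.diff γ.finite_toSet).mono hXP, hXmem, ?_⟩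
  intro Y hY
  apply hBO
  intro S hS
  exact hsub S ((hmeml S).mpr hS) hY
lemma L1 (D : Set InfNat) (hDo : IsOpen D) (hDd : Dense D) (β : Finset ℕ) (M : Set ℕ)
    (hM : M.Infinite) : ∃ L, L ⊆ M ∧ L.Infinite ∧ EllSet β L ⊆ D := by
  classical
  by_contra hcon
  have hrej : Rejects D β M := by
    intro L h1 h2 h3
    exact hcon ⟨L, h1, h2, h3⟩
  -- fusion producing L rejecting all β ∪ s, s ⊆ L
  let Inv : ℕ → Finset ℕ × Set ℕ → Prop := fun _ p =>
    p.2.Infinite ∧ p.2 ⊆ restr M β ∧ (↑p.1 ⊆ restr M β) ∧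
      (∀ a ∈ p.1, ∀ m ∈ p.2, a < m) ∧ ∀ s ⊆ p.1, Rejects D (β ∪ s) p.2
  let Qr : Finset ℕ × Set ℕ → Finset ℕ × Set ℕ → Prop := fun p q =>
    q.2 ⊆ p.2 ∧ ∃ nn, q.1 = p.1 ∪ {nn} ∧ nn ∈ p.2 ∧ ∀ a ∈ p.1, a < nn
  have h0 : Inv 0 (∅, restr M β) := by
    refine ⟨restr_infinite hM β, subset_rfl, by simp, by simp, ?_⟩
    intro s hs
    rw [Finset.subset_empty.mp hs, Finset.union_empty]
    exact rejects_mono (restr_subset _ _) hrej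
  have hstep : ∀ i p, Inv i p → ∃ q, Inv (i + 1) q ∧ Qr p q := by
    rintro i ⟨S, MS⟩ hInv
    obtain ⟨L1', hL1sub, hL1inf, hL1⟩ := step1_iter D (S.powerset.toList.map (fun s => β ∪ s))
      MS hInv.1 (by
        intro γ hγ
        obtain ⟨s, hs, rfl⟩ := List.mem_map.mp hγ
        exact hInv.2.2.2.2 s (Finset.mem_powerset.mp (Finset.mem_toList.mp hs)))
    obtain ⟨nn, hnn⟩ := (restr_infinite hL1inf (β ∪ S)).nonempty
    have hnnL1 : nn ∈ L1' := hnn.1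
    have hnnMS : nn ∈ MS := hL1sub hnnL1
    refine ⟨(S ∪ {nn}, restr L1' (β ∪ S ∪ {nn})), ⟨restr_infinite hL1inf _,
      (restr_subset _ _).trans (hL1sub.trans hInv.2.1), ?_, ?_, ?_⟩,
      (restr_subset _ _).trans hL1sub, nn, rfl, hnnMS, ?_⟩
    · rw [Finset.coe_union, Finset.coe_singleton]
      refine Set.union_subset hInv.2.2.1 ?_
      intro x hx
      rw [Set.mem_singleton_iff] at hx
      exact hx ▸ hInv.2.1 hnnMS
    · intro a ha m hm
      rcases Finset.mem_union.mp ha with h | h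
      · exact hm.2 a (by simp [h])
      · exact hm.2 a (by simp [Finset.mem_singleton.mp h])
    · intro s hs
      by_cases hmem : nn ∈ s
      · have hs' : s.erase nn ⊆ S := by
          intro x hx
          rcases Finset.mem_union.mp (hs (Finset.mem_of_mem_erase hx)) with h | h
          · exact h
          · exact absurd (Finset.mem_singleton.mp h) (Finset.ne_of_mem_erase hx)
        have hnn' : nn ∈ restr L1' (β ∪ s.erase nn) :=
          restr_anti (Finset.union_subset_union_right hs') L1' hnn
        have hr : Rejects D ((β ∪ s.erase nn) ∪ {nn}) L1' := by
          refine hL1 (β ∪ s.erase nn) ?_ nn hnn'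
          exact List.mem_map.mpr ⟨s.erase nn, Finset.mem_toList.mpr
            (Finset.mem_powerset.mpr hs'), rfl⟩
        have heq : (β ∪ s.erase nn) ∪ {nn} = β ∪ s := by
          rw [Finset.union_assoc, Finset.union_comm (s.erase nn), ← Finset.insert_eq,
            Finset.insert_erase hmem]
        exact rejects_mono (restr_subset _ _) (heq ▸ hr)
      · have hs' : s ⊆ S := fun x hx => by
          rcases Finset.mem_union.mp (hs hx) with h | h
          · exact h
          · exact absurd (Finset.mem_singleton.mp h ▸ hx) hmem
        exact rejects_mono ((restr_subset _ _).trans hL1sub) (hInv.2.2.2.2 s hs')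
    · intro a ha
      exact hnn.2 a (Finset.mem_union_right _ (by simp [ha])) |>.trans_le le_rfl
      
  obtain ⟨f, hf0, hInv, hQr⟩ := exists_chain Inv Qr _ h0 hstep
  obtain ⟨hMchain, hSmono, hmemf, hLinf⟩ := chain_facts f (by rw [hf0]) (fun i => hQr i)
  set L : Set ℕ := ⋃ j, ((f j).1 : Set ℕ) with hLdef
  have hLsub : L ⊆ restr M β := by
    intro b hb
    obtain ⟨j, hj⟩ := Set.mem_iUnion.mp hb
    exact (hInv j).2.2.1 hj
  have hLrej : ∀ s : Finset ℕ, ↑s ⊆ L → Rejects D (β ∪ s) L := by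
    intro s hsL
    have hsi : ∃ i, s ⊆ (f i).1 := by
      induction s using Finset.induction_on with
      | empty => exact ⟨0, Finset.empty_subset _⟩
      | @insert a s ha ih =>
        obtain ⟨i, hi⟩ := ih (fun x hx => hsL (by simp at hx ⊢; exact Or.inr hx))
        obtain ⟨j, hj⟩ := Set.mem_iUnion.mp (hsL (show a ∈ (↑(insert a s) : Set ℕ) by simp))
        refine ⟨max i j, Finset.insert_subset ?_ (hi.trans (hSmono i _ (le_max_left _ _)))⟩
        exact hSmono j _ (le_max_right _ _) (by simpa using hj)
    obtain ⟨i, hsi⟩ := hsi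
    intro L' hL'sub hL'inf hL'acc
    have hL''sub : restr L' (β ∪ (f i).1) ⊆ (f i).2 := by
      intro b hb
      have hbL : b ∈ L := hL'sub hb.1
      have hbnot : b ∉ (f i).1 := fun h => lt_irrefl b (hb.2 b (Finset.mem_union_right _ h))
      exact hmemf i b hbL hbnot
    exact (hInv i).2.2.2.2 s hsi (restr L' (β ∪ (f i).1)) hL''sub
      (restr_infinite hL'inf _) (accepts_mono (restr_subset _ _) hL'acc)
  -- density gives a basic set inside D below [β, L], contradicting rejection
  have hLinfty : L.Infinite := hLinf
  have hopen : IsOpen (EllSet β L) :=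
    TopologicalSpace.GenerateOpen.basic _ ⟨β, L, hLinfty, rfl⟩
  have hLpt : ∀ p ∈ L, ∀ a ∈ β, a < p := fun p hp => (hLsub hp).2
  have hne : (EllSet β L).Nonempty := ⟨_, point_mem hLinfty hLpt⟩
  obtain ⟨X, hXE, hXD⟩ := hDd.inter_open_nonempty _ hopen hne
  have hXO : X ∈ D ∩ EllSet β L := ⟨hXD, hXE⟩
  obtain ⟨γ, P, hγX, hPinf, hXγP, hsubO⟩ := exists_basic (hDo.inter hopen) hXO
  set P' := restr P γ with hP'
  have hXP' : X ∈ EllSet γ P' := mem_EllSet_restr hXγP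
  have hP'inf : P'.Infinite := by
    refine Set.Infinite.mono ?_ ((X.2.diff γ.finite_toSet))
    intro b hb
    exact ⟨hXγP.2.1 ⟨hb.1, hb.2⟩, fun a ha => hXγP.2.2 a ha b hb.1 (by simpa using hb.2)⟩
  have hP'ord : ∀ p ∈ P', ∀ a ∈ γ, a < p := fun p hp => hp.2
  have hsubβ : EllSet γ P' ⊆ EllSet β L :=
    (EllSet_mono (restr_subset _ _) γ).trans (hsubO.trans Set.inter_subset_right)
  have hsubD : EllSet γ P' ⊆ D :=
    (EllSet_mono (restr_subset _ _) γ).trans (hsubO.trans Set.inter_subset_left)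
  have hβγ : β ⊆ γ := by
    by_contra hc
    obtain ⟨b, hbβ, hbγ⟩ := Finset.not_subset.mp hc
    have hYinf : (P' \ {b}).Infinite := hP'inf.diff (Set.finite_singleton b)
    have hXmem : (⟨↑γ ∪ (P' \ {b}), hYinf.mono Set.subset_union_right⟩ : InfNat) ∈
        EllSet γ P' :=
      EllSet_mono Set.diff_subset γ (point_mem hYinf (fun p hp => hP'ord p hp.1))
    have := (hsubβ hXmem).1 (by simpa using hbβ)
    rcases this with h | h
    · exact hbγ (by simpa using h)
    · exact h.2 rfl
  have hP'L : P' ⊆ L := by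
    intro p hp
    have hYinf : (P' \ Set.Iio p).Infinite := hP'inf.diff (Set.finite_Iio p)
    have hXmem : (⟨↑γ ∪ (P' \ Set.Iio p), hYinf.mono Set.subset_union_right⟩ : InfNat) ∈
        EllSet γ P' :=
      EllSet_mono Set.diff_subset γ (point_mem hYinf (fun q hq => hP'ord q hq.1))
    have hpX : p ∈ (↑γ ∪ (P' \ Set.Iio p) : Set ℕ) := Or.inr ⟨hp, by simp⟩
    have hpβ : p ∉ (β : Set ℕ) := by
      intro h
      exact lt_irrefl p (hP'ord p hp p (hβγ (by simpa using h)))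
    exact (hsubβ hXmem).2.1 ⟨hpX, hpβ⟩
  have hγβL : ↑(γ \ β) ⊆ L := by
    intro c hc
    have hXmem : (⟨↑γ ∪ P', hP'inf.mono Set.subset_union_right⟩ : InfNat) ∈ EllSet γ P' :=
      point_mem hP'inf hP'ord
    have hcγ : c ∈ (γ : Set ℕ) := by
      simp only [Finset.coe_sdiff, Set.mem_diff] at hc
      exact hc.1
    have hcβ : c ∉ (β : Set ℕ) := by
      simp only [Finset.coe_sdiff, Set.mem_diff] at hc
      exact hc.2
    exact (hsubβ hXmem).2.1 ⟨Or.inl hcγ, hcβ⟩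
  have hrejγ : Rejects D (β ∪ (γ \ β)) L := hLrej (γ \ β) hγβL
  rw [Finset.union_sdiff_of_subset hβγ] at hrejγ
  exact hrejγ P' hP'L hP'inf hsubD
lemma L1_iter (l : List (Finset ℕ × Set InfNat)) (h : ∀ p ∈ l, IsOpen p.2 ∧ Dense p.2)
    (M : Set ℕ) (hM : M.Infinite) :
    ∃ L, L ⊆ M ∧ L.Infinite ∧ ∀ p ∈ l, EllSet p.1 L ⊆ p.2 := by
  induction l generalizing M with
  | nil => exact ⟨M, subset_rfl, hM, by simp⟩
  | cons p l ih =>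
    obtain ⟨L1', h1, h2, h3⟩ := L1 p.2 (h p (by simp)).1 (h p (by simp)).2 p.1 M hM
    obtain ⟨L, g1, g2, g3⟩ := ih (fun q hq => h q (by simp [hq])) L1' h2
    refine ⟨L, g1.trans h1, g2, ?_⟩
    intro q hq
    rcases List.mem_cons.mp hq with rfl | hq
    · exact (EllSet_mono g1 q.1).trans h3
    · exact g3 q hq

end EllAux

section
attribute [local instance 2000] EllentuckTop
open EllAux Set

/-- Corollary 4.8: if `U` is meager in the Ellentuck topology, then for every infinite `M`
and finite `α` there is an infinite `L ⊆ M` with `[α, L] ⊆ [ℕ] \ U`. -/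
theorem meager_ramsey_null (U : Set InfNat) (hU : @IsMeagre InfNat EllentuckTop U)
    (M : Set ℕ) (hM : M.Infinite) (α : Finset ℕ) :
    ∃ L ⊆ M, L.Infinite ∧ EllSet α L ⊆ Uᶜ := by
  classical
  rw [isMeagre_iff_countable_union_isNowhereDense] at hU
  obtain ⟨S, hnwd, hcnt, hsub⟩ := hU
  obtain ⟨g, hg⟩ := (hcnt.insert ∅).exists_eq_range (Set.insert_nonempty _ _)
  have hnwd' : ∀ k, IsNowhereDense (g k) := by
    intro k
    have : g k ∈ insert (∅ : Set InfNat) S := hg ▸ Set.mem_range_self k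
    rcases Set.mem_insert_iff.mp this with h | h
    · rw [h]; exact isNowhereDense_empty
    · exact hnwd _ h
  set D : ℕ → Set InfNat := fun k => (closure (g k))ᶜ with hD
  have hDo : ∀ k, IsOpen (D k) := fun k => isClosed_closure.isOpen_compl
  have hDd : ∀ k, Dense (D k) := fun k =>
    interior_eq_empty_iff_dense_compl.mp (hnwd' k)
  -- fusion
  let Inv : ℕ → Finset ℕ × Set ℕ → Prop := fun i p =>
    p.2.Infinite ∧ p.2 ⊆ restr M α ∧ (↑p.1 ⊆ restr M α) ∧
      (∀ a ∈ p.1, ∀ m ∈ p.2, a < m) ∧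
      ∀ s ⊆ p.1, ∀ k ≤ i, EllSet (α ∪ s) p.2 ⊆ D k
  let Qr : Finset ℕ × Set ℕ → Finset ℕ × Set ℕ → Prop := fun p q =>
    q.2 ⊆ p.2 ∧ ∃ nn, q.1 = p.1 ∪ {nn} ∧ nn ∈ p.2 ∧ ∀ a ∈ p.1, a < nn
  obtain ⟨M0, hM0sub, hM0inf, hM0⟩ :=
    L1 (D 0) (hDo 0) (hDd 0) α (restr M α) (restr_infinite hM α)
  have hp0 : Inv 0 (∅, M0) := by
    refine ⟨hM0inf, hM0sub, by simp, by simp, ?_⟩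
    intro s hs k hk
    rw [Finset.subset_empty.mp hs, Finset.union_empty]
    rw [Nat.le_zero.mp hk]
    exact hM0
  have hstep : ∀ i p, Inv i p → ∃ q, Inv (i + 1) q ∧ Qr p q := by
    rintro i ⟨Sf, MS⟩ hInv
    obtain ⟨nn, hnn⟩ := (restr_infinite hInv.1 (α ∪ Sf)).nonempty
    have hnnMS : nn ∈ MS := hnn.1
    set l : List (Finset ℕ × Set InfNat) :=
      (((Sf ∪ {nn}).powerset ×ˢ Finset.range (i + 2)).toList.map
        (fun q => (α ∪ q.1, D q.2))) with hl
    obtain ⟨Mq, hMqsub, hMqinf, hMq⟩ := L1_iter l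
      (by
        intro p hp
        obtain ⟨q, hq, rfl⟩ := List.mem_map.mp hp
        exact ⟨hDo q.2, hDd q.2⟩)
      (restr MS (α ∪ Sf ∪ {nn})) (restr_infinite hInv.1 _)
    have hMqMS : Mq ⊆ MS := hMqsub.trans (restr_subset _ _)
    refine ⟨(Sf ∪ {nn}, Mq), ⟨hMqinf, hMqMS.trans hInv.2.1, ?_, ?_, ?_⟩,
      hMqMS, nn, rfl, hnnMS, fun a ha => hnn.2 a (Finset.mem_union_right _ (by simp [ha]))⟩
    · rw [Finset.coe_union, Finset.coe_singleton]
      refine Set.union_subset hInv.2.2.1 ?_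
      intro x hx
      rw [Set.mem_singleton_iff] at hx
      exact hx ▸ hInv.2.1 hnnMS
    · intro a ha m hm
      have hm' := hMqsub hm
      rcases Finset.mem_union.mp ha with h | h
      · exact hm'.2 a (by simp [h])
      · exact hm'.2 a (by simp [Finset.mem_singleton.mp h])
    · intro s hs k hk
      refine hMq (α ∪ s, D k) ?_
      refine List.mem_map.mpr ⟨(s, k), ?_, rfl⟩
      rw [Finset.mem_toList, Finset.mem_product]
      exact ⟨Finset.mem_powerset.mpr hs, Finset.mem_range.mpr (by omega)⟩
  obtain ⟨f, hf0, hInv, hQr⟩ := exists_chain Inv Qr _ hp0 hstep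
  have hf01 : (f 0).1 = ∅ := by rw [hf0]
  obtain ⟨hMchain, hSmono, hmemf, hLinf⟩ := chain_facts f hf01 (fun i => hQr i)
  set L : Set ℕ := ⋃ j, ((f j).1 : Set ℕ) with hLdef
  have hLsubM : L ⊆ M := by
    intro b hb
    obtain ⟨j, hj⟩ := Set.mem_iUnion.mp hb
    exact restr_subset _ _ ((hInv j).2.2.1 hj)
  refine ⟨L, hLsubM, hLinf, ?_⟩
  intro X hX
  simp only [Set.mem_compl_iff]
  intro hXU
  obtain ⟨t, htS, hXt⟩ := hsub hXU
  have htr : t ∈ Set.range g := hg ▸ Set.mem_insert_iff.mpr (Or.inr htS)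
  obtain ⟨k, rfl⟩ := htr
  have hXDk : X ∈ D k := by
    set s : Finset ℕ := (f k).1.filter (· ∈ X.1) with hs
    have hssub : s ⊆ (f k).1 := Finset.filter_subset _ _
    have hmem : X ∈ EllSet (α ∪ s) (f k).2 := by
      refine ⟨?_, ?_, ?_⟩
      · rw [Finset.coe_union]
        refine Set.union_subset hX.1 ?_
        intro x hx
        have hx' : x ∈ s := by simpa using hx
        rw [hs, Finset.mem_filter] at hx'
        exact hx'.2
      · intro b hb
        have hbX : b ∈ X.1 := hb.1
        have hbα : b ∉ (α : Set ℕ) := fun h => hb.2 (by rw [Finset.coe_union]; exact Or.inl h)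
        have hbs : b ∉ s := fun h =>
          hb.2 (by rw [Finset.coe_union]; exact Or.inr (by simpa using h))
        have hbL : b ∈ L := hX.2.1 ⟨hbX, hbα⟩
        have hbnot : b ∉ (f k).1 := fun h => hbs (Finset.mem_filter.mpr ⟨h, hbX⟩)
        exact hmemf k b hbL hbnot
      · intro a ha b hb hbmem
        have hbα : b ∉ α := fun h => hbmem (Finset.mem_union_left _ h)
        have hbs : b ∉ s := fun h => hbmem (Finset.mem_union_right _ h)
        rcases Finset.mem_union.mp ha with h | h
        · exact hX.2.2 a h b hb hbα
        · have hbL : b ∈ L := hX.2.1 ⟨hb, by simpa using hbα⟩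
          have hbnot : b ∉ (f k).1 := fun hmem' => hbs (Finset.mem_filter.mpr ⟨hmem', hb⟩)
          exact (hInv k).2.2.2.1 a (hssub h) b (hmemf k b hbL hbnot)
    exact (hInv k).2.2.2.2 s hssub k le_rfl hmem
  exact hXDk (subset_closure hXt)
end
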